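/- arXiv:2103.12282 — 4 statements merged into one kernel-verified Lean document; each statement's English description precedes it below -/
import Mathlib

section
/- Let A be a d×d real matrix and for each natural number k define the d×d matrix B_k = exp(A) · ∫₀¹ (τ − 1/2)ᵏ · exp(−τ·A) dτ. Then for every k ≥ 1, A·B_k = k·B_{k−1} + (−1/2)ᵏ · (exp(A) − (−1)ᵏ·I). -/
open Matrix

section aux
variable {d : ℕ}

attribute [local instance] Matrix.linftyOpNormedRing Matrix.linftyOpNormedAlgebra

noncomputable def entryCLM (i j : Fin d) : Matrix (Fin d) (Fin d) ℝ →L[ℝ] ℝ :=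
  LinearMap.mkContinuous (Matrix.entryLinearMap ℝ ℝ i j) 1 (fun M => by
    rw [one_mul]
    have h1 : ‖M i j‖₊ ≤ ∑ j', ‖M i j'‖₊ :=
      Finset.single_le_sum (f := fun j' => ‖M i j'‖₊) (fun _ _ => zero_le) (Finset.mem_univ j)
    have h2 : (∑ j', ‖M i j'‖₊) ≤ ‖M‖₊ := by
      rw [Matrix.linfty_opNNNorm_def]
      exact Finset.le_sup (f := fun i => ∑ j', ‖M i j'‖₊) (Finset.mem_univ i)
    exact_mod_cast h1.trans h2)

theorem entry_hasDerivAt (X : Matrix (Fin d) (Fin d) ℝ) (i j : Fin d) (τ : ℝ) :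
    HasDerivAt (fun u : ℝ => (NormedSpace.exp (u • X)) i j)
      ((X * NormedSpace.exp (τ • X)) i j) τ :=
  (entryCLM i j).hasFDerivAt.comp_hasDerivAt τ (hasDerivAt_exp_smul_const' X τ)

theorem entry_continuous (X : Matrix (Fin d) (Fin d) ℝ) (i j : Fin d) :
    Continuous (fun u : ℝ => (NormedSpace.exp (u • X)) i j) :=
  (entryCLM i j).continuous.comp <| continuous_iff_continuousAt.mpr
    fun τ => (hasDerivAt_exp_smul_const' X τ).continuousAt

theorem exp_mul_exp_neg' (A : Matrix (Fin d) (Fin d) ℝ) :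
    NormedSpace.exp A * NormedSpace.exp (-A) = 1 := by
  rw [← Matrix.exp_add_of_commute A (-A) (Commute.neg_right (Commute.refl A)),
    add_neg_cancel, NormedSpace.exp_zero]

end aux

/-- Recurrence relation for the matrices
`B_k = exp(A) ∫₀¹ (τ − 1/2)ᵏ exp(−τ A) dτ` (entrywise integrals):
for `k ≥ 1`, `A B_k = k B_{k−1} + (−1/2)ᵏ (exp(A) − (−1)ᵏ I)`. -/
theorem matrix_Bk_recurrence
    (d : ℕ) (A : Matrix (Fin d) (Fin d) ℝ)
    (B : ℕ → Matrix (Fin d) (Fin d) ℝ)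
    (hB : ∀ k : ℕ, B k = NormedSpace.exp A *
      Matrix.of (fun i j =>
        ∫ τ in (0:ℝ)..1, (τ - 1/2) ^ k * (NormedSpace.exp (-(τ • A))) i j)) :
    ∀ k : ℕ, 1 ≤ k →
      A * B k = (k : ℝ) • B (k - 1) +
        ((-(1:ℝ)/2) ^ k) • (NormedSpace.exp A - ((-1:ℝ) ^ k) • (1 : Matrix (Fin d) (Fin d) ℝ)) := by
  intro k hk
  obtain ⟨m, rfl⟩ : ∃ m, k = m + 1 := ⟨k - 1, (Nat.succ_pred_eq_of_pos hk).symm⟩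
  set g : ℝ → Matrix (Fin d) (Fin d) ℝ := fun τ => NormedSpace.exp (τ • (-A)) with hg
  have hneg : ∀ τ : ℝ, NormedSpace.exp (-(τ • A)) = g τ := fun τ => by
    rw [hg]; congr 1; rw [smul_neg]
  have hcont : ∀ i j : Fin d, Continuous fun τ : ℝ => g τ i j :=
    fun i j => entry_continuous (-A) i j
  have hcont2 : ∀ i j : Fin d, Continuous fun τ : ℝ => ((-A) * g τ) i j := by
    intro i j
    simp only [Matrix.mul_apply]
    exact continuous_finset_sum _ fun l _ => continuous_const.mul (hcont l j)
  set M : ℕ → Matrix (Fin d) (Fin d) ℝ := fun n =>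
    Matrix.of (fun i j => ∫ τ in (0:ℝ)..1, (τ - 1/2) ^ n * g τ i j) with hM
  have hBM : ∀ n, B n = NormedSpace.exp A * M n := by
    intro n
    rw [hB n]
    simp only [hneg]
    rfl
  -- entrywise FTC
  have key : ∀ i j : Fin d,
      ((m : ℝ) + 1) * (M m i j) + (((-A) * M (m+1)) i j)
        = (1/2 : ℝ)^(m+1) * (NormedSpace.exp (-A)) i j
          - (-1/2 : ℝ)^(m+1) * (1 : Matrix (Fin d) (Fin d) ℝ) i j := by
    intro i j
    have hderiv : ∀ τ : ℝ, HasDerivAt (fun τ : ℝ => (τ - 1/2)^(m+1) * g τ i j)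
        ((((m:ℝ)+1) * (τ - 1/2)^m) * (g τ i j)
          + (τ - 1/2)^(m+1) * (((-A) * g τ) i j)) τ := by
      intro τ
      have hpow : HasDerivAt (fun τ : ℝ => (τ - 1/2)^(m+1)) (((m:ℝ)+1) * (τ - 1/2)^m) τ := by
        have := ((hasDerivAt_id τ).sub_const (1/2 : ℝ)).fun_pow (m+1)
        simpa using this
      exact hpow.mul (entry_hasDerivAt (-A) i j τ)
    have hint1 : IntervalIntegrable (fun τ : ℝ => (((m:ℝ)+1) * (τ - 1/2)^m) * (g τ i j))
        MeasureTheory.volume 0 1 :=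
      ((continuous_const.mul ((continuous_sub_right (1/2 : ℝ)).pow m)).mul
        (hcont i j)).intervalIntegrable 0 1
    have hint2 : IntervalIntegrable (fun τ : ℝ => (τ - 1/2)^(m+1) * (((-A) * g τ) i j))
        MeasureTheory.volume 0 1 :=
      (((continuous_sub_right (1/2 : ℝ)).pow (m+1)).mul
        (hcont2 i j)).intervalIntegrable 0 1
    have hftc := intervalIntegral.integral_eq_sub_of_hasDerivAt
      (fun τ _ => hderiv τ) (hint1.add hint2)
    rw [intervalIntegral.integral_add hint1 hint2] at hftc
    -- first integral
    have e1 : (∫ τ in (0:ℝ)..1, (((m:ℝ)+1) * (τ - 1/2)^m) * (g τ i j))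
        = ((m:ℝ)+1) * (M m i j) := by
      simp only [mul_assoc]
      rw [intervalIntegral.integral_const_mul]
      rfl
    -- second integral
    have e2 : (∫ τ in (0:ℝ)..1, (τ - 1/2)^(m+1) * (((-A) * g τ) i j))
        = ((-A) * M (m+1)) i j := by
      have hrw : ∀ τ : ℝ, (τ - 1/2)^(m+1) * (((-A) * g τ) i j)
          = ∑ l, (-A) i l * ((τ - 1/2)^(m+1) * g τ l j) := by
        intro τ
        rw [Matrix.mul_apply, Finset.mul_sum]
        exact Finset.sum_congr rfl fun l _ => by ring
      rw [intervalIntegral.integral_congr (g := fun τ => ∑ l, (-A) i l * ((τ - 1/2)^(m+1) * g τ l j))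
        (fun τ _ => hrw τ)]
      rw [intervalIntegral.integral_finset_sum (f := fun l τ => (-A) i l * ((τ - 1/2)^(m+1) * g τ l j)) (fun l _ =>
        (continuous_const.mul (((continuous_sub_right (1/2 : ℝ)).pow (m+1)).mul
          (hcont l j))).intervalIntegrable 0 1)]
      rw [Matrix.mul_apply]
      exact Finset.sum_congr rfl fun l _ => by
        rw [intervalIntegral.integral_const_mul]; rfl
    rw [e1, e2] at hftc
    -- boundary values
    have hb1 : g 1 = NormedSpace.exp (-A) := by rw [hg]; simp
    have hb0 : g 0 = 1 := by rw [hg]; simp [NormedSpace.exp_zero]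
    rw [hftc, hb1, hb0]
    norm_num
  have hkey : A * M (m+1) = ((m:ℝ)+1) • M m
      - (1/2 : ℝ)^(m+1) • NormedSpace.exp (-A) + (-1/2 : ℝ)^(m+1) • 1 := by
    ext i j
    have := key i j
    simp only [Matrix.add_apply, Matrix.sub_apply, Matrix.smul_apply, Matrix.neg_mul,
      Matrix.neg_apply, smul_eq_mul] at this ⊢
    linarith
  have hcomm : A * NormedSpace.exp A = NormedSpace.exp A * A :=
    ((Commute.refl A).exp_right).eq
  have hinv : NormedSpace.exp A * NormedSpace.exp (-A) = 1 := exp_mul_exp_neg' A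
  have sc : (-(1:ℝ)/2)^(m+1) * (-1:ℝ)^(m+1) = (1/2 : ℝ)^(m+1) := by
    rw [← mul_pow]; norm_num
  rw [hBM, hBM, ← mul_assoc, hcomm, mul_assoc, hkey]
  simp only [Nat.add_sub_cancel, mul_add, mul_sub, Matrix.mul_smul, mul_one, hinv,
    Nat.cast_add, Nat.cast_one, smul_sub, smul_smul, sc]
  module
end

section
/- Fix a natural number M ≥ 1 and define the polynomials P_M(x) = ∑_{m=0}^{M} ((2M−m)!/(m!·(M−m)!))·xᵐ and Q_M(x) = P_M(−x). Then the function f : ℝ → ℝ given by f(x) = eˣ·Q_M(x) − P_M(x) has vanishing derivatives at 0 up to order 2M; that is, the k-th iterated derivative of f at 0 equals 0 for every k with 0 ≤ k ≤ 2M. Consequently, the diagonal Padé approximant P_M(x)/Q_M(x) agrees with eˣ to order 2M at x = 0. -/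
open Finset Polynomial

/-- Pointwise finite-difference identity for `descFactorial`, in `ℝ`. -/
lemma pade_aux_ptwise (n s : ℕ) (hn : 1 ≤ n) :
    ((n.descFactorial s : ℝ)) =
      ((n - 1).descFactorial s : ℝ) + s * ((n - 1).descFactorial (s - 1) : ℝ) := by
  obtain ⟨m, rfl⟩ := Nat.exists_eq_add_of_le' hn
  cases s with
  | zero => simp
  | succ t =>
    simp only [Nat.add_sub_cancel, Nat.succ_sub_one]
    rcases le_or_gt t m with h | h
    · rw [Nat.succ_descFactorial_succ, Nat.descFactorial_succ]
      push_cast [Nat.cast_sub h]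
      ring
    · rw [Nat.succ_descFactorial_succ, Nat.descFactorial_succ,
        Nat.descFactorial_eq_zero_iff_lt.mpr h]
      push_cast
      ring

/-- Alternating binomial sum of `descFactorial` values. -/
lemma pade_findiff (k : ℕ) : ∀ N M : ℕ, k ≤ N →
    ∑ j ∈ Finset.range (k + 1),
        (-1 : ℝ) ^ j * (k.choose j : ℝ) * ((N - j).descFactorial M : ℝ)
      = (M.descFactorial k : ℝ) * (((N - k).descFactorial (M - k) : ℕ) : ℝ) := by
  induction k with
  | zero => simp
  | succ k ih =>
    intro N M hk
    have hrec := Finset.sum_choose_succ_mul (R := ℝ)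
      (fun i _ => (-1 : ℝ) ^ i * ((N - i).descFactorial M : ℝ)) k
    have hL : ∑ j ∈ Finset.range (k + 2),
        (-1 : ℝ) ^ j * ((k + 1).choose j : ℝ) * ((N - j).descFactorial M : ℝ)
        = ∑ i ∈ Finset.range (k + 2),
            ((k + 1).choose i : ℝ) * ((-1 : ℝ) ^ i * ((N - i).descFactorial M : ℝ)) := by
      refine Finset.sum_congr rfl fun i _ => by ring
    rw [hL, hrec]
    have h1 : ∑ i ∈ Finset.range (k + 1),
        (k.choose i : ℝ) * ((-1 : ℝ) ^ i * ((N - i).descFactorial M : ℝ))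
        = (M.descFactorial k : ℝ) * (((N - k).descFactorial (M - k) : ℕ) : ℝ) := by
      rw [← ih N M (by omega)]
      refine Finset.sum_congr rfl fun i _ => by ring
    have h2 : ∑ i ∈ Finset.range (k + 1),
        (k.choose i : ℝ) * ((-1 : ℝ) ^ (i + 1) * ((N - (i + 1)).descFactorial M : ℝ))
        = -((M.descFactorial k : ℝ) * ((((N - 1) - k).descFactorial (M - k) : ℕ) : ℝ)) := by
      rw [← ih (N - 1) M (by omega)]
      rw [← Finset.sum_neg_distrib]
      refine Finset.sum_congr rfl fun i _ => ?_
      have : N - (i + 1) = N - 1 - i := by omega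
      rw [this]; ring
    rw [h1, h2]
    have hn1 : 1 ≤ N - k := by omega
    have hsub1 : N - 1 - k = N - k - 1 := by omega
    have hsub2 : N - (k + 1) = N - k - 1 := by omega
    have hsub3 : M - (k + 1) = M - k - 1 := by omega
    rw [hsub1, hsub2, hsub3, pade_aux_ptwise (N - k) (M - k) hn1,
      Nat.descFactorial_succ]
    push_cast
    ring

/-- Cast of `descFactorial` as a quotient of factorials. -/
lemma pade_cast_descFactorial {n k : ℕ} (h : k ≤ n) :
    ((n.descFactorial k : ℕ) : ℝ) = (n.factorial : ℝ) / ((n - k).factorial : ℝ) := by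
  rw [Nat.descFactorial_eq_factorial_mul_choose]
  rw [Nat.cast_mul, Nat.cast_choose ℝ h]
  have h1 : ((k.factorial : ℕ) : ℝ) ≠ 0 := by positivity
  field_simp

/-- The diagonal Padé approximant of order `M` of the exponential function
agrees with `eˣ` to order `2M` at `x = 0`: the function
`f(x) = eˣ Q_M(x) − P_M(x)` has vanishing iterated derivatives at `0` up to
order `2M`, where `P_M(x) = ∑ₘ ((2M−m)!/(m!(M−m)!)) xᵐ` and `Q_M(x) = P_M(−x)`. -/
theorem pade_exponential_order
    (M : ℕ) (hM : 1 ≤ M)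
    (P Q f : ℝ → ℝ)
    (hP : ∀ x : ℝ, P x = ∑ m ∈ Finset.range (M + 1),
      (((2 * M - m).factorial : ℝ) / ((m.factorial : ℝ) * ((M - m).factorial : ℝ))) * x ^ m)
    (hQ : ∀ x : ℝ, Q x = P (-x))
    (hf : ∀ x : ℝ, f x = Real.exp x * Q x - P x) :
    ∀ k : ℕ, k ≤ 2 * M → iteratedDeriv k f 0 = 0 := by
  intro k hk
  set c : ℕ → ℝ := fun m =>
    ((2 * M - m).factorial : ℝ) / ((m.factorial : ℝ) * ((M - m).factorial : ℝ)) with hc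
  set p : ℝ[X] := ∑ m ∈ Finset.range (M + 1), Polynomial.C (c m) * Polynomial.X ^ m with hp
  set q : ℝ[X] := ∑ m ∈ Finset.range (M + 1),
    Polynomial.C ((-1 : ℝ) ^ m * c m) * Polynomial.X ^ m with hq
  have hPeval : ∀ x : ℝ, P x = p.eval x := by
    intro x
    rw [hP x, hp]
    rw [Polynomial.eval_finset_sum]
    simp [hc]
  have hQeval : ∀ x : ℝ, Q x = q.eval x := by
    intro x
    rw [hQ x, hP (-x), hq]
    rw [Polynomial.eval_finset_sum]
    refine Finset.sum_congr rfl fun m _ => ?_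
    simp only [Polynomial.eval_mul, Polynomial.eval_C, Polynomial.eval_pow,
      Polynomial.eval_X]
    rw [show ((-x) ^ m : ℝ) = (-1) ^ m * x ^ m by rw [← neg_one_mul, mul_pow]]
    ring
  -- coefficients of such sums
  have hcoeff : ∀ (d : ℕ → ℝ) (j : ℕ),
      (∑ m ∈ Finset.range (M + 1), Polynomial.C (d m) * Polynomial.X ^ m).coeff j
        = if j ≤ M then d j else 0 := by
    intro d j
    rw [Polynomial.finset_sum_coeff]
    simp only [Polynomial.coeff_C_mul, Polynomial.coeff_X_pow, mul_ite, mul_one, mul_zero]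
    rw [Finset.sum_ite_eq (Finset.range (M + 1)) j d]
    simp [Nat.lt_succ_iff]
  -- main structural induction
  have key : ∀ n : ℕ, iteratedDeriv n f = fun x => Real.exp x *
      Polynomial.eval x (∑ j ∈ Finset.range (n + 1),
        n.choose j • (Polynomial.derivative^[j] q))
      - Polynomial.eval x (Polynomial.derivative^[n] p) := by
    intro n
    induction n with
    | zero =>
      funext x
      rw [iteratedDeriv_zero, hf x, hPeval, hQeval]
      norm_num
    | succ n ihn =>
      rw [iteratedDeriv_succ, ihn]
      funext x
      set r : ℝ[X] := ∑ j ∈ Finset.range (n + 1), n.choose j • (Polynomial.derivative^[j] q)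
        with hr
      set s : ℝ[X] := Polynomial.derivative^[n] p with hs
      have hdiff1 : DifferentiableAt ℝ (fun x : ℝ => Real.exp x * Polynomial.eval x r) x :=
        (Real.differentiable_exp x).mul (Polynomial.differentiable r x)
      have hdiff2 : DifferentiableAt ℝ (fun x : ℝ => Polynomial.eval x s) x :=
        Polynomial.differentiable s x
      rw [deriv_fun_sub hdiff1 hdiff2, deriv_fun_mul (Real.differentiable_exp x)
        (Polynomial.differentiable r x), Real.deriv_exp, Polynomial.deriv,
        Polynomial.deriv]
      have hsum : ∑ j ∈ Finset.range (n + 2),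
          (n + 1).choose j • (Polynomial.derivative^[j] q)
          = r + Polynomial.derivative r := by
        have := Finset.sum_choose_succ_nsmul
          (M := ℝ[X]) (fun i _ => Polynomial.derivative^[i] q) n
        rw [this, hr]
        congr 1
        rw [map_sum]
        refine Finset.sum_congr rfl fun i _ => ?_
        rw [map_nsmul, Function.iterate_succ_apply']
      rw [hsum, Function.iterate_succ_apply', ← hs]
      rw [Polynomial.eval_add]
      ring
  rw [key k]
  simp only
  rw [Real.exp_zero, one_mul, ← Polynomial.coeff_zero_eq_eval_zero,
    ← Polynomial.coeff_zero_eq_eval_zero]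
  rw [Polynomial.finset_sum_coeff]
  have hco : ∀ j : ℕ, (Polynomial.derivative^[j] q).coeff 0
      = (j.factorial : ℝ) * (if j ≤ M then (-1 : ℝ) ^ j * c j else 0) := by
    intro j
    rw [Polynomial.coeff_iterate_derivative, hq, hcoeff]
    simp only [zero_add, Nat.descFactorial_self, smul_eq_mul]
    push_cast
    ring
  have hpk : (Polynomial.derivative^[k] p).coeff 0
      = (k.factorial : ℝ) * (if k ≤ M then c k else 0) := by
    rw [Polynomial.coeff_iterate_derivative, hp, hcoeff]
    simp only [zero_add, Nat.descFactorial_self, smul_eq_mul]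
    push_cast
    ring
  simp only [Polynomial.coeff_smul]
  simp only [hco, hpk, smul_eq_mul, nsmul_eq_mul]
  -- reduce to the combinatorial identity
  have hterm : ∀ j : ℕ, (↑(k.choose j) : ℝ) * ((j.factorial : ℝ) *
      (if j ≤ M then (-1 : ℝ) ^ j * c j else 0))
      = (-1 : ℝ) ^ j * (k.choose j : ℝ) * ((2 * M - j).descFactorial M : ℝ) := by
    intro j
    by_cases hj : j ≤ M
    · rw [if_pos hj, pade_cast_descFactorial (by omega : M ≤ 2 * M - j)]
      have h2 : 2 * M - j - M = M - j := by omega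
      rw [h2, hc]
      have hjf : ((j.factorial : ℕ) : ℝ) ≠ 0 := by positivity
      have hMj : (((M - j).factorial : ℕ) : ℝ) ≠ 0 := by positivity
      field_simp
    · rw [if_neg hj, Nat.descFactorial_eq_zero_iff_lt.mpr (by omega : 2 * M - j < M)]
      simp
  have hrhs : (k.factorial : ℝ) * (if k ≤ M then c k else 0)
      = (M.descFactorial k : ℝ) * (((2 * M - k).descFactorial (M - k) : ℕ) : ℝ) := by
    by_cases hkM : k ≤ M
    · rw [if_pos hkM, pade_cast_descFactorial hkM,
        pade_cast_descFactorial (by omega : M - k ≤ 2 * M - k)]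
      have h1 : 2 * M - k - (M - k) = M := by omega
      have h2 : 2 * M - k - (M - k) = M := by omega
      rw [h1, hc]
      have hMk : (((M - k).factorial : ℕ) : ℝ) ≠ 0 := by positivity
      have hMf : ((M.factorial : ℕ) : ℝ) ≠ 0 := by positivity
      have hkf : ((k.factorial : ℕ) : ℝ) ≠ 0 := by positivity
      field_simp
    · rw [if_neg hkM, Nat.descFactorial_eq_zero_iff_lt.mpr (by omega : M < k)]
      simp
  calc ∑ j ∈ Finset.range (k + 1), (↑(k.choose j) : ℝ) *
        ((j.factorial : ℝ) * (if j ≤ M then (-1 : ℝ) ^ j * c j else 0))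
      - (k.factorial : ℝ) * (if k ≤ M then c k else 0)
      = ∑ j ∈ Finset.range (k + 1),
          (-1 : ℝ) ^ j * (k.choose j : ℝ) * ((2 * M - j).descFactorial M : ℝ)
        - (M.descFactorial k : ℝ) * (((2 * M - k).descFactorial (M - k) : ℕ) : ℝ) := by
        rw [hrhs]
        congr 1
        exact Finset.sum_congr rfl fun j _ => hterm j
    _ = 0 := by rw [pade_findiff k (2 * M) M hk]; ring
end

section
/- Let A be an n×n real matrix (regarded as a complex matrix with real entries), let g ∈ ℝⁿ (regarded as a complex vector with real entries), and let r ∈ ℂ with Im(r) ≠ 0. Suppose y ∈ ℂⁿ satisfies (r·I − A)·y = g. Define the real vector x ∈ ℝⁿ by x = −Im(y)/Im(r), where Im(y) is the entrywise imaginary part of y. Then (r·I − A)(r̄·I − A)·x = g, where r̄ is the complex conjugate of r. -/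
open Matrix Complex

/-- If `(r I − A) y = g` with `A`, `g` real and `Im r ≠ 0`, then the real vector
`x = −Im(y)/Im(r)` solves `(r I − A)(r̄ I − A) x = g`. -/
theorem complex_root_real_solution
    (n : ℕ) (A : Matrix (Fin n) (Fin n) ℝ) (g : Fin n → ℝ)
    (r : ℂ) (hr : r.im ≠ 0)
    (y : Fin n → ℂ)
    (hy : (r • (1 : Matrix (Fin n) (Fin n) ℂ) - A.map (Complex.ofReal)).mulVec y =
      fun i => ((g i : ℂ)))
    (x : Fin n → ℝ) (hx : x = fun i => -(y i).im / r.im) :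
    ((r • (1 : Matrix (Fin n) (Fin n) ℂ) - A.map (Complex.ofReal)) *
        ((starRingEnd ℂ r) • (1 : Matrix (Fin n) (Fin n) ℂ) - A.map (Complex.ofReal))).mulVec
        (fun i => ((x i : ℂ))) = fun i => ((g i : ℂ)) := by
  set M : Matrix (Fin n) (Fin n) ℂ := r • (1 : Matrix (Fin n) (Fin n) ℂ) - A.map Complex.ofReal with hM
  set N : Matrix (Fin n) (Fin n) ℂ :=
    (starRingEnd ℂ r) • (1 : Matrix (Fin n) (Fin n) ℂ) - A.map Complex.ofReal with hN
  have him : (r.im : ℂ) ≠ 0 := by exact_mod_cast hr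
  have hc : N = M - ((r - starRingEnd ℂ r) • (1 : Matrix (Fin n) (Fin n) ℂ)) := by
    rw [hM, hN, sub_smul]; abel
  have hMN : ∀ i j, (starRingEnd ℂ) (M i j) = N i j := by
    intro i j
    simp [hM, hN, Matrix.sub_apply, Matrix.smul_apply, Matrix.one_apply,
      Matrix.map_apply, apply_ite (starRingEnd ℂ), Complex.conj_ofReal]
  clear_value M N
  have hcomm : M * N = N * M := by
    rw [hc, mul_sub, sub_mul, mul_smul_comm, smul_mul_assoc, mul_one, one_mul]
  have hstar : N.mulVec (star y) = fun i => (g i : ℂ) := by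
    funext i
    have h2 := congrArg (starRingEnd ℂ) (congrFun hy i)
    simp only [Matrix.mulVec, dotProduct, map_sum, _root_.map_mul, Complex.conj_ofReal,
      hMN] at h2
    simpa [Matrix.mulVec, dotProduct, Pi.star_apply, Complex.star_def] using h2
  have hx' : (fun i => ((x i : ℂ))) = (-(2 * (r.im : ℂ) * I))⁻¹ • (y - star y) := by
    funext i
    have hsub := Complex.sub_conj (y i)
    push_cast at hsub
    simp only [hx, Pi.smul_apply, Pi.sub_apply, Pi.star_apply, Complex.star_def, hsub,
      smul_eq_mul]
    field_simp [him]
    push_cast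
    rw [neg_mul, div_mul_cancel₀ _ him]
  have e1 : (M * N).mulVec y = N.mulVec (fun i => (g i : ℂ)) := by
    rw [hcomm, ← Matrix.mulVec_mulVec, hy]
  have e2 : (M * N).mulVec (star y) = M.mulVec (fun i => (g i : ℂ)) := by
    rw [← Matrix.mulVec_mulVec, hstar]
  have hNM : N - M = (-(r - starRingEnd ℂ r)) • (1 : Matrix (Fin n) (Fin n) ℂ) := by
    rw [hc, neg_smul]; abel
  have key : (M * N).mulVec (y - star y) = (-(2 * (r.im : ℂ) * I)) • fun i => (g i : ℂ) := by
    rw [Matrix.mulVec_sub, e1, e2, ← Matrix.sub_mulVec, hNM,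
      Matrix.smul_mulVec, Matrix.one_mulVec]
    have hsr := Complex.sub_conj r
    push_cast at hsr
    rw [hsr]
  rw [hx', Matrix.mulVec_smul, key, smul_smul, inv_mul_cancel₀, one_smul]
  exact neg_ne_zero.mpr (mul_ne_zero (mul_ne_zero two_ne_zero him) Complex.I_ne_zero)
end

section
/- Let n be a positive integer, let M, C, K be n×n real matrices with M invertible, let Δt be a real number, and let f_m ∈ ℝⁿ. Let A be the 2n×2n block matrix A = [[−Δt·M⁻¹C, −Δt²·M⁻¹K], [I, 0]], and for vectors u₀, u₁, v₀, v₁ ∈ ℝⁿ set z₀ = (v₀, u₀), z₁ = (v₁, u₁), and F = (Δt²·M⁻¹·f_m, 0). Then the order-1 diagonal Padé time-stepping equation (2·I − A)·(z₁ + z₀) = 4·z₀ + 2·F holds if and only if both of the following hold: (4·M + 2·Δt·C + Δt²·K)·(v₁ + v₀) = 4·Δt²·f_m + 8·M·v₀ − 4·Δt²·K·u₀, and u₁ = u₀ + (1/2)·(v₁ + v₀). In other words, the order-1 Padé scheme coincides with Newmark's constant average acceleration (trapezoidal) update. -/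
open Matrix

lemma sum_elim_eq_iff {α : Type*} {n : ℕ} (a b c d : Fin n → α) :
    Sum.elim a b = Sum.elim c d ↔ a = c ∧ b = d := by
  constructor
  · intro h
    exact ⟨funext fun i => congrFun h (.inl i), funext fun i => congrFun h (.inr i)⟩
  · rintro ⟨rfl, rfl⟩; rfl

/-- The order-1 diagonal Padé time-stepping equation
`(2I − A)(z₁ + z₀) = 4 z₀ + 2 F`, with
`A = [[−Δt M⁻¹C, −Δt² M⁻¹K], [I, 0]]`, `zⱼ = (vⱼ, uⱼ)` and
`F = (Δt² M⁻¹ f_m, 0)`, is equivalent to Newmark's constant average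
acceleration (trapezoidal) update. -/
theorem pade_order_one_is_trapezoidal
    (n : ℕ) (hn : 0 < n)
    (M C K : Matrix (Fin n) (Fin n) ℝ) (hM : IsUnit M.det)
    (Δt : ℝ) (f_m : Fin n → ℝ)
    (A : Matrix (Fin n ⊕ Fin n) (Fin n ⊕ Fin n) ℝ)
    (hA : A = Matrix.fromBlocks (-(Δt • (M⁻¹ * C))) (-(Δt ^ 2 • (M⁻¹ * K))) 1 0)
    (u₀ u₁ v₀ v₁ : Fin n → ℝ)
    (z₀ z₁ F : Fin n ⊕ Fin n → ℝ)
    (hz₀ : z₀ = Sum.elim v₀ u₀) (hz₁ : z₁ = Sum.elim v₁ u₁)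
    (hF : F = Sum.elim (Δt ^ 2 • (M⁻¹.mulVec f_m)) 0) :
    ((2 : ℝ) • (1 : Matrix (Fin n ⊕ Fin n) (Fin n ⊕ Fin n) ℝ) - A).mulVec (z₁ + z₀) =
        (4 : ℝ) • z₀ + (2 : ℝ) • F
      ↔
    (((4 : ℝ) • M + (2 * Δt) • C + Δt ^ 2 • K).mulVec (v₁ + v₀) =
        (4 * Δt ^ 2) • f_m + (8 : ℝ) • M.mulVec v₀ - (4 * Δt ^ 2) • K.mulVec u₀ ∧
      u₁ = u₀ + (1/2 : ℝ) • (v₁ + v₀)) := by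
  subst hA hz₀ hz₁ hF
  have hx : Sum.elim v₁ u₁ + Sum.elim v₀ u₀ = Sum.elim (v₁ + v₀) (u₁ + u₀) := by
    funext i; cases i <;> simp
  have hR : (4 : ℝ) • Sum.elim v₀ u₀ + (2 : ℝ) • Sum.elim (Δt ^ 2 • (M⁻¹.mulVec f_m))
      (0 : Fin n → ℝ) =
      Sum.elim ((4 : ℝ) • v₀ + (2 * Δt ^ 2) • M⁻¹.mulVec f_m) ((4 : ℝ) • u₀) := by
    funext i; cases i <;> simp <;> ring
  rw [hx, hR, Matrix.sub_mulVec, Matrix.smul_mulVec, Matrix.one_mulVec,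
    Matrix.fromBlocks_mulVec]
  simp only [Sum.elim_comp_inl, Sum.elim_comp_inr, Matrix.neg_mulVec,
    Matrix.smul_mulVec, Matrix.one_mulVec, Matrix.zero_mulVec, add_zero]
  have hL : (2 : ℝ) • Sum.elim (v₁ + v₀) (u₁ + u₀) -
      Sum.elim (-(Δt • (M⁻¹ * C).mulVec (v₁ + v₀)) + -(Δt ^ 2 • (M⁻¹ * K).mulVec (u₁ + u₀)))
        (v₁ + v₀) =
      Sum.elim ((2 : ℝ) • (v₁ + v₀) + Δt • (M⁻¹ * C).mulVec (v₁ + v₀)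
          + Δt ^ 2 • (M⁻¹ * K).mulVec (u₁ + u₀))
        ((2 : ℝ) • (u₁ + u₀) - (v₁ + v₀)) := by
    funext i; cases i <;> simp <;> ring
  rw [hL, sum_elim_eq_iff]
  have hMi := Matrix.mul_nonsing_inv M hM
  have hMC : M * (M⁻¹ * C) = C := by rw [← mul_assoc, hMi, one_mul]
  have hMK : M * (M⁻¹ * K) = K := by rw [← mul_assoc, hMi, one_mul]
  have hMf : M.mulVec (M⁻¹.mulVec f_m) = f_m := by
    rw [Matrix.mulVec_mulVec, hMi, Matrix.one_mulVec]
  have h2 : ((2 : ℝ) • (u₁ + u₀) - (v₁ + v₀) = (4 : ℝ) • u₀) ↔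
      u₁ = u₀ + (1/2 : ℝ) • (v₁ + v₀) := by
    constructor
    · intro h
      linear_combination (norm := module) (1/2 : ℝ) • h
    · intro h
      linear_combination (norm := module) (2 : ℝ) • h
  rw [h2, and_congr_left_iff]
  intro hu
  subst hu
  have key : ∀ x y : Fin n → ℝ, (M.mulVec x = M.mulVec y) ↔ x = y := by
    intro x y
    constructor
    · intro h
      have h2 := congrArg (M⁻¹.mulVec ·) h
      simpa [Matrix.mulVec_mulVec, Matrix.nonsing_inv_mul M hM] using h2
    · intro h; rw [h]
  constructor
  · intro h1
    have h1' := congrArg (M.mulVec ·) h1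
    simp only [Matrix.mulVec_add, Matrix.mulVec_smul, Matrix.mulVec_mulVec, hMC, hMK, hMf,
      Matrix.mulVec_sub] at h1'
    simp only [Matrix.add_mulVec, Matrix.smul_mulVec, Matrix.mulVec_add,
      Matrix.mulVec_smul]
    linear_combination (norm := module) (2 : ℝ) • h1'
  · intro h1
    rw [← key]
    simp only [Matrix.mulVec_add, Matrix.mulVec_smul, Matrix.mulVec_mulVec, hMC, hMK, hMf]
    simp only [Matrix.add_mulVec, Matrix.smul_mulVec, Matrix.mulVec_add,
      Matrix.mulVec_smul, Matrix.mulVec_sub] at h1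
    linear_combination (norm := module) (1/2 : ℝ) • h1
end
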